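/- If δ is a real number with 3π/4 < δ < π and sin(π − δ)·sin(δ − π/4) = sin(π/4)·sin(2δ − 5π/4), then (1 + √2)·(tan δ)² + (2 − √2)·tan δ − 1 = 0 and tan δ = 2 − √5 − √(7 − 3·√5). -/
import Mathlib


open Real

set_option maxHeartbeats 1600000 in
/-- Coolsaet's equality for the `f = 16` earth map tiling (Proposition 7.15):
the solution with `3π/4 < δ < π` satisfies `(1+√2) tan² δ + (2-√2) tan δ - 1 = 0`
and `tan δ = 2 - √5 - √(7 - 3√5)`. -/
theorem stmt_13 (δ : ℝ) (h1 : 3 * π / 4 < δ) (h2 : δ < π)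
    (h : Real.sin (π - δ) * Real.sin (δ - π / 4) =
      Real.sin (π / 4) * Real.sin (2 * δ - 5 * π / 4)) :
    (1 + Real.sqrt 2) * Real.tan δ ^ 2 + (2 - Real.sqrt 2) * Real.tan δ - 1 = 0 ∧
    Real.tan δ = 2 - Real.sqrt 5 - Real.sqrt (7 - 3 * Real.sqrt 5) := by
  have hπ := Real.pi_pos
  have hsq2 : Real.sqrt 2 ^ 2 = 2 := Real.sq_sqrt (by norm_num)
  have hsq5 : Real.sqrt 5 ^ 2 = 5 := Real.sq_sqrt (by norm_num)
  have hsq10 : Real.sqrt 10 ^ 2 = 10 := Real.sq_sqrt (by norm_num)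
  have h2pos : (0:ℝ) < Real.sqrt 2 := Real.sqrt_pos.mpr (by norm_num)
  have h5pos : (0:ℝ) < Real.sqrt 5 := Real.sqrt_pos.mpr (by norm_num)
  have h10pos : (0:ℝ) < Real.sqrt 10 := Real.sqrt_pos.mpr (by norm_num)
  have h25 : Real.sqrt 2 * Real.sqrt 5 = Real.sqrt 10 := by
    rw [← Real.sqrt_mul (by norm_num : (0:ℝ) ≤ 2)]; norm_num
  have h210 : Real.sqrt 2 * Real.sqrt 10 = 2 * Real.sqrt 5 := by
    rw [← Real.sqrt_mul (by norm_num : (0:ℝ) ≤ 2)]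
    rw [show (2*(10:ℝ)) = 2^2 * 5 by norm_num,
      Real.sqrt_mul (by positivity), Real.sqrt_sq (by norm_num)]
  have h5w : Real.sqrt 5 * Real.sqrt 10 = 5 * Real.sqrt 2 := by
    rw [← Real.sqrt_mul (by norm_num : (0:ℝ) ≤ 5)]
    rw [show ((5:ℝ)*10) = 5^2 * 2 by norm_num,
      Real.sqrt_mul (by positivity), Real.sqrt_sq (by norm_num)]
  -- numeric bounds
  have hq1 : Real.sqrt 2 < 1.415 := by nlinarith [hsq2, h2pos]
  have hq2 : (1.414:ℝ) < Real.sqrt 2 := by nlinarith [hsq2, h2pos]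
  have hf1 : Real.sqrt 5 < 2.237 := by nlinarith [hsq5, h5pos]
  have hf2 : (2.236:ℝ) < Real.sqrt 5 := by nlinarith [hsq5, h5pos]
  have hw1 : Real.sqrt 10 < 3.163 := by nlinarith [hsq10, h10pos]
  have hw2 : (3.162:ℝ) < Real.sqrt 10 := by nlinarith [hsq10, h10pos]
  -- the nested radical
  have ha : Real.sqrt (7 - 3 * Real.sqrt 5) = (3 * Real.sqrt 2 - Real.sqrt 10) / 2 := by
    rw [show (7 - 3 * Real.sqrt 5 : ℝ) = ((3 * Real.sqrt 2 - Real.sqrt 10) / 2)^2 by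
      linear_combination (-(9:ℝ)/4)*hsq2 + (3/2)*h210 - (1/4)*hsq10]
    exact Real.sqrt_sq (by nlinarith)
  -- trig rewriting
  have c54 : Real.cos (5 * π / 4) = -(Real.sqrt 2 / 2) := by
    rw [show (5 * π / 4 : ℝ) = π + π / 4 by ring, Real.cos_add]
    simp [Real.cos_pi_div_four]
  have s54 : Real.sin (5 * π / 4) = -(Real.sqrt 2 / 2) := by
    rw [show (5 * π / 4 : ℝ) = π + π / 4 by ring, Real.sin_add]
    simp [Real.sin_pi_div_four]
  rw [Real.sin_pi_sub, Real.sin_sub δ (π/4), Real.sin_sub (2*δ) (5*π/4), c54, s54,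
    Real.sin_two_mul, Real.cos_two_mul, Real.cos_pi_div_four, Real.sin_pi_div_four] at h
  have hp : Real.sin δ ^ 2 + Real.cos δ ^ 2 = 1 := Real.sin_sq_add_cos_sq δ
  have hs : 0 < Real.sin δ := Real.sin_pos_of_pos_of_lt_pi (by linarith) h2
  have hc : Real.cos δ < 0 := Real.cos_neg_of_pi_div_two_lt_of_lt (by linarith) (by linarith)
  have hc0 : Real.cos δ ≠ 0 := ne_of_lt hc
  have key : (2 + Real.sqrt 2) * Real.sin δ ^ 2
      + (2 - Real.sqrt 2) * (Real.sin δ * Real.cos δ) = 1 := by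
    linear_combination 2*h + 2*hp
      - ((2*Real.sin δ*Real.cos δ - 2*Real.cos δ^2 + 1)/2)*hsq2
  have htan : Real.tan δ * Real.cos δ = Real.sin δ := by
    rw [Real.tan_eq_sin_div_cos]; field_simp
  have hcne : Real.cos δ ^ 2 ≠ 0 := pow_ne_zero 2 hc0
  have h0 : Real.cos δ ^ 2 *
      ((1 + Real.sqrt 2) * Real.tan δ ^ 2 + (2 - Real.sqrt 2) * Real.tan δ - 1) = 0 := by
    linear_combination (1 + Real.sqrt 2) * (Real.tan δ * Real.cos δ + Real.sin δ) * htan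
      + (2 - Real.sqrt 2) * Real.cos δ * htan + key - hp
  have quad : (1 + Real.sqrt 2) * Real.tan δ ^ 2 + (2 - Real.sqrt 2) * Real.tan δ - 1 = 0 := by
    rcases mul_eq_zero.mp h0 with h' | h'
    · exact absurd h' hcne
    · exact h' 
  refine ⟨quad, ?_⟩
  have ht : Real.tan δ < 0 := by
    rw [Real.tan_eq_sin_div_cos]
    exact div_neg_of_pos_of_neg hs hc
  rw [ha]
  obtain ⟨r, hrdef⟩ : ∃ r : ℝ,
      r = 2 - Real.sqrt 5 - (3 * Real.sqrt 2 - Real.sqrt 10) / 2 := ⟨_, rfl⟩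
  have hr2 : r ^ 2 = 16 - 7 * Real.sqrt 5 - 11 * Real.sqrt 2 + 5 * Real.sqrt 10 := by
    rw [hrdef]
    linear_combination hsq5 + (9/4)*hsq2 + (1/4)*hsq10 + 3*h25 - h5w - (3/2)*h210
  have hr : (1 + Real.sqrt 2) * r ^ 2 + (2 - Real.sqrt 2) * r - 1 = 0 := by
    linear_combination (1 + Real.sqrt 2)*hr2 - (19/2)*hsq2 - 6*h25 + (9/2)*h210
      + (2 - Real.sqrt 2)*hrdef
  have hrneg : r < -(77/100) := by rw [hrdef]; linarith
  have h3 : Real.tan δ + r < -(77/100) := by linarith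
  have h4 : (1 + Real.sqrt 2) * (Real.tan δ + r)
      < (1 + Real.sqrt 2) * (-(77/100)) :=
    mul_lt_mul_of_pos_left h3 (by linarith)
  have hF : (1 + Real.sqrt 2) * (Real.tan δ + r) + (2 - Real.sqrt 2) < 0 := by
    nlinarith [h4, hq2]
  have hzero : (Real.tan δ - r) *
      ((1 + Real.sqrt 2) * (Real.tan δ + r) + (2 - Real.sqrt 2)) = 0 := by
    linear_combination quad - hr
  rcases mul_eq_zero.mp hzero with h' | h'
  · rw [← hrdef]; linarith
  · exact absurd h' (ne_of_lt hF)
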